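/- Let G be a tournament on vertex set V, B-imperfect with respect to a total order π. If B' ⊆ V is a feedback vertex set of G with |B'| ≤ α|B|, and π₁ is a topological ordering of the acyclic tournament G[V \ B'], then the ordering π̃ obtained by prepending an arbitrary ordering of B' to π₁ satisfies lcs(π, π̃) ≥ |V| − (α+1)|B|. -/

import Mathlib

/-- From an `α`-approximate feedback vertex set `B'` of a `B`-imperfect tournament,
prepending an arbitrary ordering of `B'` to a topological order `π₁` of `G[V \ B']`
gives an ordering with `lcs ≥ |V| - (α+1)|B|` w.r.t. `π`. -/
theorem stmt_3 {V : Type*} [Fintype V] [DecidableEq V] [LinearOrder V]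
    (E : V → V → Prop) (B B' : Finset V) (α : ℝ)
    (hirr : ∀ v : V, ¬ E v v)
    (htour : ∀ u v : V, u ≠ v → (E u v ↔ ¬ E v u))
    (himp : ∀ u v : V, u ≠ v → u ∉ B → v ∉ B → (E u v ↔ u < v))
    -- B' is a feedback vertex set: removing it makes the tournament acyclic
    (hfvs : ¬ ∃ v : V, Relation.TransGen (fun a c => a ∉ B' ∧ c ∉ B' ∧ E a c) v v)
    (hcard : (B'.card : ℝ) ≤ α * (B.card : ℝ))
    -- π₁ : a topological ordering of the vertices outside B'
    (π₁ : List V) (hnd : π₁.Nodup) (hmem : ∀ v : V, v ∈ π₁ ↔ v ∉ B')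
    (htopo : ∀ (i j : ℕ) (hi : i < π₁.length) (hj : j < π₁.length),
      i < j → ¬ E (π₁.get ⟨j, hj⟩) (π₁.get ⟨i, hi⟩))
    -- an arbitrary ordering of B'
    (lB : List V) (hlBnd : lB.Nodup) (hlBmem : ∀ v : V, v ∈ lB ↔ v ∈ B')
    -- π as the sorted list of all vertices
    (πL : List V) (hπsort : πL.Pairwise (· < ·)) (hπmem : ∀ v : V, v ∈ πL) :
    ∃ l : List V, l.Sublist πL ∧ l.Sublist (lB ++ π₁) ∧
      (Fintype.card V : ℝ) - (α + 1) * (B.card : ℝ) ≤ (l.length : ℝ) := by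
  classical
  set l : List V := π₁.filter (fun v => v ∉ B) with hl
  have hsub₁ : l.Sublist π₁ := List.filter_sublist
  -- pairwise ¬E b a on π₁
  have hpw : π₁.Pairwise (fun a b => ¬ E b a) := by
    rw [List.pairwise_iff_get]
    intro i j hij
    exact htopo i j i.isLt j.isLt hij
  have hlnd : l.Nodup := hnd.sublist hsub₁
  have hlsorted : l.Pairwise (· < ·) := by
    have hpw' : l.Pairwise (fun a b => ¬ E b a) := hpw.sublist hsub₁
    have := hlnd.and hpw'
    refine this.imp_of_mem ?_
    intro a b ha hb ⟨hne, hnE⟩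
    have haB : a ∉ B := by simpa using (List.mem_filter.1 ha).2
    have hbB : b ∉ B := by simpa using (List.mem_filter.1 hb).2
    have hE : E a b := (htour a b hne).2 hnE
    exact (himp a b hne haB hbB).1 hE
  have hsubπL : l.Sublist πL := by
    refine List.sublist_of_subperm_of_pairwise (hlnd.subperm fun x _ => hπmem x)
      hlsorted hπsort
  refine ⟨l, hsubπL, hsub₁.trans (List.sublist_append_right lB π₁), ?_⟩
  -- length bounds
  have hπ₁len : π₁.length = Fintype.card V - B'.card := by
    have : π₁.toFinset = B'ᶜ := by
      ext v; simp [hmem v]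
    have h1 : π₁.toFinset.card = π₁.length := List.toFinset_card_of_nodup hnd
    rw [← h1, this, Finset.card_compl]
  have hB'le : B'.card ≤ Fintype.card V := B'.card_le_univ
  have hsplit : π₁.length = l.length + (π₁.filter (fun v => v ∈ B)).length := by
    have := List.length_eq_length_filter_add (l := π₁) (fun v => decide (v ∉ B))
    simpa [hl, Bool.not_eq_true', decide_eq_false_iff_not] using this
  have hfB : (π₁.filter (fun v => v ∈ B)).length ≤ B.card := by
    have hnd' : (π₁.filter (fun v => v ∈ B)).Nodup := hnd.filter _
    have h1 : (π₁.filter (fun v => v ∈ B)).toFinset.card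
        = (π₁.filter (fun v => v ∈ B)).length := List.toFinset_card_of_nodup hnd'
    rw [← h1]
    apply Finset.card_le_card
    intro x hx
    have := List.mem_toFinset.1 hx
    simpa using (List.mem_filter.1 this).2
  have hllen : (Fintype.card V : ℝ) - (B'.card : ℝ) - (B.card : ℝ) ≤ (l.length : ℝ) := by
    have : Fintype.card V - B'.card ≤ l.length + B.card := by
      omega
    have := (Nat.cast_le (α := ℝ)).2 this
    push_cast [hπ₁len, Nat.cast_sub hB'le] at this ⊢
    linarith
  have : (α + 1) * (B.card : ℝ) ≥ (B'.card : ℝ) + (B.card : ℝ) := by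
    nlinarith
  linarith
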